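/- Let p be a prime, let K = 𝔽_p(t) be the field of rational functions over the finite field 𝔽_p, and let A = K[x, y]. Define the K-algebra automorphism σ : A → A by σ(x) = tx and σ(y) = (1+t)y. Let J = (x − y + 1) and I = (x − 1, y − 1). Then for n ∈ ℤ, σ^n(J) ⊆ I if and only if n ∈ {1, p, p², p³, …}; in particular, the key identity is that for a positive integer n, t^n − (1+t)^n + 1 = 0 in 𝔽_p(t) if and only if n is a power of p. Consequently the set {n ∈ ℤ : σ^n(I) ⊇ J} = {−1, −p, −p², …} does not have the two-sided SML property, showing the characteristic-zero hypothesis in the generalized SML theorem for ideal inclusions is necessary. -/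

import Mathlib

/-- A set `S ⊆ ℤ` has the two-sided SML property if it is a finite union of
complete doubly infinite arithmetic progressions `{a*n + b : n ∈ ℤ}` (allowing
`a = 0`, which gives singletons), together with a finite set. -/
def TwoSidedSML (S : Set ℤ) : Prop :=
  ∃ (P : Finset (ℤ × ℤ)) (F : Set ℤ), F.Finite ∧
    S = (⋃ q ∈ P, {k : ℤ | ∃ n : ℤ, k = q.1 * n + q.2}) ∪ F

section StmtAux

open MvPolynomial

variable {p : ℕ} [Fact p.Prime]

lemma aux_poly_pow_char : ∀ n : ℕ, 0 < n →
    (Polynomial.X + 1 : Polynomial (ZMod p)) ^ n = Polynomial.X ^ n + 1 →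
    ∃ k, n = p ^ k := by
  intro n
  induction n using Nat.strong_induction_on with
  | _ n ih =>
    intro hn h
    rcases eq_or_lt_of_le (Nat.succ_le_of_lt hn) with h1 | h1
    · exact ⟨0, by rw [pow_zero]; omega⟩
    by_cases hp : p ∣ n
    · obtain ⟨m, rfl⟩ := hp
      have hp2 : 2 ≤ p := (Fact.out : p.Prime).two_le
      have hm : 0 < m := Nat.pos_of_ne_zero fun h0 => by simp [h0] at hn
      have hppos : 0 < p := by omega
      have hfrob : (Polynomial.X + 1 : Polynomial (ZMod p)) ^ p = Polynomial.X ^ p + 1 := by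
        rw [add_pow_char, one_pow]
      have key : (Polynomial.X + 1 : Polynomial (ZMod p)) ^ m = Polynomial.X ^ m + 1 := by
        apply Polynomial.expand_injective hppos
        rw [map_pow, map_add, map_add, map_pow, Polynomial.expand_X, map_one, ← hfrob,
          ← pow_mul, h, pow_mul]
      have hmlt : m < p * m := by nlinarith
      obtain ⟨k, hk⟩ := ih m hmlt hm key
      exact ⟨k + 1, by rw [hk, pow_succ']⟩
    · exfalso
      have hder := congrArg Polynomial.derivative h
      simp only [Polynomial.derivative_pow, Polynomial.derivative_add,
        Polynomial.derivative_one, Polynomial.derivative_X, Polynomial.derivative_X_pow,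
        mul_one, add_zero] at hder
      have hne : (Polynomial.C (n : ZMod p) : Polynomial (ZMod p)) ≠ 0 := by
        rw [Ne, Polynomial.C_eq_zero, ZMod.natCast_eq_zero_iff]
        exact hp
      have heq : (Polynomial.X + 1 : Polynomial (ZMod p)) ^ (n - 1) = Polynomial.X ^ (n - 1) := by
        apply mul_left_cancel₀ hne
        exact hder
      have hev := congrArg (Polynomial.eval 0) heq
      rw [Polynomial.eval_pow, Polynomial.eval_pow, Polynomial.eval_add, Polynomial.eval_X,
        Polynomial.eval_one, zero_add, one_pow, zero_pow (by omega : n - 1 ≠ 0)] at hev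
      exact one_ne_zero hev

lemma aux_poly_char (n : ℕ) (hn : 0 < n) :
    (Polynomial.X + 1 : Polynomial (ZMod p)) ^ n = Polynomial.X ^ n + 1 ↔ ∃ k, n = p ^ k := by
  refine ⟨aux_poly_pow_char n hn, ?_⟩
  rintro ⟨k, rfl⟩
  rw [add_pow_char_pow, one_pow]

lemma aux_ratfunc_char (n : ℕ) (hn : 0 < n) :
    (RatFunc.X : RatFunc (ZMod p)) ^ n - (1 + RatFunc.X) ^ n + 1 = 0 ↔ ∃ k : ℕ, n = p ^ k := by
  rw [← aux_poly_char n hn]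
  constructor
  · intro h
    have h2 : (algebraMap (Polynomial (ZMod p)) (RatFunc (ZMod p)))
        ((Polynomial.X + 1) ^ n) = (algebraMap (Polynomial (ZMod p)) (RatFunc (ZMod p)))
        (Polynomial.X ^ n + 1) := by
      rw [map_pow, map_add, map_add, map_pow, map_one, RatFunc.algebraMap_X]
      rw [add_comm (1 : RatFunc (ZMod p)) RatFunc.X] at h
      linear_combination -h
    exact RatFunc.algebraMap_injective (ZMod p) h2
  · intro h
    have h2 := congrArg (algebraMap (Polynomial (ZMod p)) (RatFunc (ZMod p))) h
    rw [map_pow, map_add, map_add, map_pow, map_one, RatFunc.algebraMap_X] at h2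
    rw [add_comm (1 : RatFunc (ZMod p)) RatFunc.X]
    linear_combination -h2

lemma aux_one_add_X_ne : (1 + RatFunc.X : RatFunc (ZMod p)) ≠ 0 := by
  rw [show (1 + RatFunc.X : RatFunc (ZMod p))
      = algebraMap (Polynomial (ZMod p)) _ (1 + Polynomial.X) by
    rw [map_add, map_one, RatFunc.algebraMap_X]]
  intro h0
  have h1 : (1 + Polynomial.X : Polynomial (ZMod p)) = 0 :=
    RatFunc.algebraMap_injective (ZMod p) (by rw [h0, map_zero])
  have := congrArg (Polynomial.coeff · 0) h1
  simp at this

lemma aux_neg_ne (m : ℕ) (hm : 0 < m) :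
    ((RatFunc.X : RatFunc (ZMod p)) ^ m)⁻¹ - ((1 + RatFunc.X) ^ m)⁻¹ + 1 ≠ 0 := by
  set t : RatFunc (ZMod p) := RatFunc.X with ht
  have hXmap : (1 + t : RatFunc (ZMod p))
      = algebraMap (Polynomial (ZMod p)) _ (1 + Polynomial.X) := by
    rw [map_add, map_one, RatFunc.algebraMap_X]
  have htne : t ≠ 0 := RatFunc.X_ne_zero
  have hune : (1 + t : RatFunc (ZMod p)) ≠ 0 := aux_one_add_X_ne
  intro h
  have hkey : ((1 + t) ^ m - t ^ m + t ^ m * (1 + t) ^ m : RatFunc (ZMod p)) = 0 := by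
    have h2 : ((t ^ m)⁻¹ - ((1 + t) ^ m)⁻¹ + 1) * (t ^ m * (1 + t) ^ m)
        = (1 + t) ^ m - t ^ m + t ^ m * (1 + t) ^ m := by
      field_simp
    rw [← h2, h, zero_mul]
  have hpoly : ((1 + Polynomial.X) ^ m - Polynomial.X ^ m
      + Polynomial.X ^ m * (1 + Polynomial.X) ^ m : Polynomial (ZMod p)) = 0 := by
    apply RatFunc.algebraMap_injective (ZMod p)
    simp only [map_add, map_sub, map_mul, map_pow, map_one, map_zero, RatFunc.algebraMap_X]
    exact hkey
  have hmon : ((1 + Polynomial.X : Polynomial (ZMod p)) ^ m).Monic := by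
    apply Polynomial.Monic.pow
    simpa [add_comm] using Polynomial.monic_X_add_C (1 : ZMod p)
  have hdeg : ((1 + Polynomial.X : Polynomial (ZMod p)) ^ m).natDegree = m := by
    rw [Polynomial.natDegree_pow, show (1 + Polynomial.X : Polynomial (ZMod p))
      = Polynomial.X + Polynomial.C 1 by rw [map_one, add_comm],
      Polynomial.natDegree_X_add_C, mul_one]
  have hc := congrArg (Polynomial.coeff · (m + m)) hpoly
  simp only [Polynomial.coeff_add, Polynomial.coeff_sub, Polynomial.coeff_zero,
    Polynomial.coeff_X_pow_mul] at hc
  have h3 := hmon.coeff_natDegree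
  rw [hdeg] at h3
  rw [Polynomial.coeff_eq_zero_of_natDegree_lt
      (by rw [hdeg]; omega : ((1 + Polynomial.X : Polynomial (ZMod p)) ^ m).natDegree < m + m),
    Polynomial.coeff_X_pow, if_neg (by omega), h3] at hc
  simp at hc

lemma aux_E (n : ℤ) :
    ((RatFunc.X : RatFunc (ZMod p)) ^ n - (1 + RatFunc.X) ^ n + 1 = 0)
      ↔ ∃ k : ℕ, n = (p : ℤ) ^ k := by
  have hp2 : 2 ≤ p := (Fact.out : p.Prime).two_le
  rcases lt_trichotomy n 0 with hlt | rfl | hgt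
  · constructor
    · intro h
      exfalso
      obtain ⟨m, rfl⟩ : ∃ m : ℕ, n = -(m : ℤ) := ⟨n.natAbs, by omega⟩
      have hm : 0 < m := by omega
      rw [zpow_neg, zpow_neg, zpow_natCast, zpow_natCast] at h
      exact aux_neg_ne m hm h
    · rintro ⟨k, hk⟩
      exfalso
      have : (0:ℤ) < (p:ℤ)^k := pow_pos (by exact_mod_cast Nat.lt_of_lt_of_le two_pos hp2) k
      omega
  · rw [zpow_zero, zpow_zero]
    norm_num
    intro k
    have : (0:ℤ) < (p:ℤ)^k := pow_pos (by exact_mod_cast Nat.lt_of_lt_of_le two_pos hp2) k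
    omega
  · obtain ⟨m, rfl⟩ : ∃ m : ℕ, n = (m : ℤ) := ⟨n.toNat, by omega⟩
    have hm : 0 < m := by exact_mod_cast hgt
    rw [zpow_natCast, zpow_natCast, aux_ratfunc_char m hm]
    constructor
    · rintro ⟨k, rfl⟩
      exact ⟨k, by push_cast; ring⟩
    · rintro ⟨k, hk⟩
      exact ⟨k, by exact_mod_cast hk⟩

lemma aux_mem_span_point {K : Type*} [Field K] (a b : K) (f : MvPolynomial (Fin 2) K) :
    f ∈ Ideal.span {X 0 - C a, X 1 - C b} ↔ eval ![a, b] f = 0 := by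
  constructor
  · intro hf
    have hle : Ideal.span {X 0 - C a, X 1 - C b}
        ≤ RingHom.ker (eval (R := K) ![a, b]) := by
      rw [Ideal.span_le]
      rintro g hg
      simp only [Set.mem_insert_iff, Set.mem_singleton_iff] at hg
      rcases hg with rfl | rfl <;>
        simp [RingHom.mem_ker]
    simpa [RingHom.mem_ker] using hle hf
  · intro hf
    have key : ∀ g : MvPolynomial (Fin 2) K,
        g - C (eval ![a, b] g) ∈ Ideal.span {X 0 - C a, X 1 - C b} := by
      intro g
      induction g using MvPolynomial.induction_on with
      | C c => simp
      | add f g hf hg =>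
          have := Ideal.add_mem _ hf hg
          simpa [add_sub_add_comm, map_add] using this
      | mul_X f i hf =>
          have hXi : (X i - C (![a, b] i) : MvPolynomial (Fin 2) K)
              ∈ Ideal.span {X 0 - C a, X 1 - C b} := by
            apply Ideal.subset_span
            fin_cases i <;> simp
          have hrw : f * X i - C (eval ![a, b] (f * X i))
              = f * (X i - C (![a, b] i)) + C (![a, b] i) * (f - C (eval ![a, b] f)) := by
            rw [eval_mul, eval_X, map_mul]
            ring
          rw [hrw]
          exact Ideal.add_mem _ (Ideal.mul_mem_left _ _ hXi) (Ideal.mul_mem_left _ _ hf)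
    have := key f
    rwa [hf, map_zero, sub_zero] at this

lemma aux_span_unit_eq {K : Type*} [Field K] (a b : K) (ha : a ≠ 0) (hb : b ≠ 0) :
    (Ideal.span {C a * X 0 - 1, C b * X 1 - 1} : Ideal (MvPolynomial (Fin 2) K))
      = Ideal.span {X 0 - C a⁻¹, X 1 - C b⁻¹} := by
  have e1 : (C a * X 0 - 1 : MvPolynomial (Fin 2) K) = C a * (X 0 - C a⁻¹) := by
    rw [mul_sub, ← map_mul, mul_inv_cancel₀ ha, map_one]
  have e2 : (C b * X 1 - 1 : MvPolynomial (Fin 2) K) = C b * (X 1 - C b⁻¹) := by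
    rw [mul_sub, ← map_mul, mul_inv_cancel₀ hb, map_one]
  have e3 : (X 0 - C a⁻¹ : MvPolynomial (Fin 2) K) = C a⁻¹ * (C a * X 0 - 1) := by
    rw [mul_sub, ← mul_assoc, ← map_mul, inv_mul_cancel₀ ha, map_one, one_mul, mul_one]
  have e4 : (X 1 - C b⁻¹ : MvPolynomial (Fin 2) K) = C b⁻¹ * (C b * X 1 - 1) := by
    rw [mul_sub, ← mul_assoc, ← map_mul, inv_mul_cancel₀ hb, map_one, one_mul, mul_one]
  apply le_antisymm <;> rw [Ideal.span_le] <;> rintro g hg <;>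
    simp only [Set.mem_insert_iff, Set.mem_singleton_iff] at hg
  · rcases hg with rfl | rfl
    · rw [e1]
      exact Ideal.mul_mem_left _ _ (Ideal.subset_span (by simp))
    · rw [e2]
      exact Ideal.mul_mem_left _ _ (Ideal.subset_span (by simp))
  · rcases hg with rfl | rfl
    · rw [e3]
      exact Ideal.mul_mem_left _ _ (Ideal.subset_span (by simp))
    · rw [e4]
      exact Ideal.mul_mem_left _ _ (Ideal.subset_span (by simp))

lemma aux_zpow_apply {K : Type*} [Field K]
    (τ : MvPolynomial (Fin 2) K ≃ₐ[K] MvPolynomial (Fin 2) K)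
    (c : K) (hc : c ≠ 0) (x : MvPolynomial (Fin 2) K) (h : τ x = C c * x) :
    ∀ n : ℤ, (τ ^ n) x = C (c ^ n) * x := by
  have hC : ∀ (e : MvPolynomial (Fin 2) K ≃ₐ[K] MvPolynomial (Fin 2) K) (d : K),
      e (C d) = C d := fun e d => by
    simpa [MvPolynomial.algebraMap_eq] using e.commutes d
  have hinv : τ⁻¹ x = C c⁻¹ * x := by
    apply τ.injective
    rw [show (τ⁻¹ : MvPolynomial (Fin 2) K ≃ₐ[K] MvPolynomial (Fin 2) K) = τ.symm from rfl,
      τ.apply_symm_apply, map_mul, hC, h, ← mul_assoc, ← map_mul, inv_mul_cancel₀ hc,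
      map_one, one_mul]
  intro n
  induction n using Int.induction_on with
  | zero => simp
  | succ k ih =>
      rw [zpow_add_one, AlgEquiv.mul_apply, h, map_mul, hC, ih, zpow_add_one₀ hc, map_mul]
      ring
  | pred k ih =>
      rw [zpow_sub_one, AlgEquiv.mul_apply, hinv, map_mul, hC, ih, zpow_sub_one₀ hc, map_mul]
      ring

end StmtAux

open MvPolynomial in
/-- **Lech's characteristic-`p` counterexample (Example 6.5).**
Let `p` be a prime, `K = 𝔽_p(t)`, `A = K[x, y]`, and let `σ` be the
`K`-algebra automorphism of `A` with `σ(x) = t·x` and `σ(y) = (1+t)·y`.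
Let `J = (x − y + 1)` and `I = (x − 1, y − 1)`. Then:
(key identity) for `n > 0`, `tⁿ − (1+t)ⁿ + 1 = 0` iff `n` is a power of `p`;
`σⁿ(J) ⊆ I` iff `n ∈ {1, p, p², …}`; consequently
`{n ∈ ℤ : σⁿ(I) ⊇ J} = {−1, −p, −p², …}`, and this set does not have the
two-sided SML property. -/
theorem stmt19 (p : ℕ) [Fact p.Prime]
    (σ : MvPolynomial (Fin 2) (RatFunc (ZMod p)) ≃ₐ[RatFunc (ZMod p)]
         MvPolynomial (Fin 2) (RatFunc (ZMod p)))
    (hx : σ (MvPolynomial.X 0) = MvPolynomial.C (RatFunc.X) * MvPolynomial.X 0)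
    (hy : σ (MvPolynomial.X 1) = MvPolynomial.C (1 + RatFunc.X) * MvPolynomial.X 1)
    (J : Ideal (MvPolynomial (Fin 2) (RatFunc (ZMod p))))
    (I : Ideal (MvPolynomial (Fin 2) (RatFunc (ZMod p))))
    (hJ : J = Ideal.span {MvPolynomial.X 0 - MvPolynomial.X 1 + 1})
    (hI : I = Ideal.span {MvPolynomial.X 0 - 1, MvPolynomial.X 1 - 1}) :
    (∀ n : ℕ, 0 < n →
      ((RatFunc.X : RatFunc (ZMod p)) ^ n - (1 + RatFunc.X) ^ n + 1 = 0 ↔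
        ∃ k : ℕ, n = p ^ k)) ∧
    (∀ n : ℤ,
      J.map (σ ^ n : MvPolynomial (Fin 2) (RatFunc (ZMod p)) ≃ₐ[RatFunc (ZMod p)]
        MvPolynomial (Fin 2) (RatFunc (ZMod p))) ≤ I ↔ ∃ k : ℕ, n = (p : ℤ) ^ k) ∧
    ({n : ℤ | J ≤ I.map (σ ^ n : MvPolynomial (Fin 2) (RatFunc (ZMod p)) ≃ₐ[RatFunc (ZMod p)]
        MvPolynomial (Fin 2) (RatFunc (ZMod p)))} = {n : ℤ | ∃ k : ℕ, n = -((p : ℤ) ^ k)}) ∧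
    ¬ TwoSidedSML {n : ℤ | J ≤ I.map (σ ^ n : MvPolynomial (Fin 2) (RatFunc (ZMod p))
        ≃ₐ[RatFunc (ZMod p)] MvPolynomial (Fin 2) (RatFunc (ZMod p)))} := by
  have hp2 : 2 ≤ p := (Fact.out : p.Prime).two_le
  have htne : (RatFunc.X : RatFunc (ZMod p)) ≠ 0 := RatFunc.X_ne_zero
  have hune : (1 + RatFunc.X : RatFunc (ZMod p)) ≠ 0 := aux_one_add_X_ne
  have hx0 : ∀ n : ℤ, (σ ^ n) (X 0) = C ((RatFunc.X : RatFunc (ZMod p)) ^ n) * X 0 :=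
    aux_zpow_apply σ _ htne _ hx
  have hx1 : ∀ n : ℤ, (σ ^ n) (X 1) = C ((1 + RatFunc.X : RatFunc (ZMod p)) ^ n) * X 1 :=
    aux_zpow_apply σ _ hune _ hy
  have hJmap : ∀ n : ℤ, J.map (σ ^ n) = Ideal.span
      {C ((RatFunc.X : RatFunc (ZMod p)) ^ n) * X 0 - C ((1 + RatFunc.X) ^ n) * X 1 + 1} := by
    intro n
    rw [hJ, Ideal.map_span, Set.image_singleton, map_add, map_sub, hx0 n, hx1 n, map_one]
  have hImap : ∀ n : ℤ, I.map (σ ^ n) = Ideal.span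
      {X 0 - C (((RatFunc.X : RatFunc (ZMod p)) ^ n)⁻¹),
       X 1 - C (((1 + RatFunc.X : RatFunc (ZMod p)) ^ n)⁻¹)} := by
    intro n
    rw [hI, Ideal.map_span]
    have himg : (⇑(σ ^ n) : MvPolynomial (Fin 2) (RatFunc (ZMod p)) →
          MvPolynomial (Fin 2) (RatFunc (ZMod p))) '' {X 0 - 1, X 1 - 1} =
        {C ((RatFunc.X : RatFunc (ZMod p)) ^ n) * X 0 - 1,
         C ((1 + RatFunc.X : RatFunc (ZMod p)) ^ n) * X 1 - 1} := by
      rw [Set.image_insert_eq, Set.image_singleton]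
      simp only [map_sub, map_one]
      rw [hx0, hx1]
    rw [himg, aux_span_unit_eq _ _ (zpow_ne_zero _ htne) (zpow_ne_zero _ hune)]
  have hI' : I = Ideal.span {X 0 - C (1 : RatFunc (ZMod p)), X 1 - C 1} := by
    rw [hI, map_one]
  have part2 : ∀ n : ℤ, J.map (σ ^ n) ≤ I ↔ ∃ k : ℕ, n = (p : ℤ) ^ k := by
    intro n
    rw [hJmap n, Ideal.span_le, Set.singleton_subset_iff, SetLike.mem_coe, hI',
      aux_mem_span_point]
    rw [show eval ![(1 : RatFunc (ZMod p)), 1]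
        (C ((RatFunc.X : RatFunc (ZMod p)) ^ n) * X 0 - C ((1 + RatFunc.X) ^ n) * X 1 + 1)
        = (RatFunc.X : RatFunc (ZMod p)) ^ n - (1 + RatFunc.X) ^ n + 1 by
      simp]
    exact aux_E n
  have part3 : {n : ℤ | J ≤ I.map (σ ^ n)} = {n : ℤ | ∃ k : ℕ, n = -((p : ℤ) ^ k)} := by
    ext n
    simp only [Set.mem_setOf_eq]
    rw [hJ, Ideal.span_le, Set.singleton_subset_iff, SetLike.mem_coe, hImap n,
      aux_mem_span_point]
    rw [show eval ![((RatFunc.X : RatFunc (ZMod p)) ^ n)⁻¹,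
        ((1 + RatFunc.X : RatFunc (ZMod p)) ^ n)⁻¹] (X 0 - X 1 + 1)
        = (RatFunc.X : RatFunc (ZMod p)) ^ (-n) - (1 + RatFunc.X) ^ (-n) + 1 by
      rw [zpow_neg, zpow_neg]
      simp]
    rw [aux_E (-n)]
    constructor
    · rintro ⟨k, hk⟩
      exact ⟨k, by omega⟩
    · rintro ⟨k, hk⟩
      exact ⟨k, by omega⟩
  refine ⟨fun n hn => aux_ratfunc_char n hn, part2, part3, ?_⟩
  rw [part3]
  rintro ⟨P, F, hF, hS⟩
  have hSinf : {n : ℤ | ∃ k : ℕ, n = -((p : ℤ) ^ k)}.Infinite := by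
    apply Set.infinite_of_injective_forall_mem (f := fun k : ℕ => -((p : ℤ) ^ k))
    · intro i j hij
      simp only [neg_inj] at hij
      exact Nat.pow_right_injective hp2 (by exact_mod_cast hij)
    · intro k
      exact ⟨k, rfl⟩
  by_cases hall : ∀ q ∈ P, q.1 = 0
  · refine hSinf ?_
    rw [hS]
    refine Set.Finite.union ?_ hF
    refine Set.Finite.biUnion P.finite_toSet ?_
    intro q hq
    apply Set.Finite.subset (Set.finite_singleton q.2)
    rintro k ⟨n, rfl⟩
    simp [hall q hq]
  · push_neg at hall
    obtain ⟨q, hqP, hq0⟩ := hall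
    have hmem : q.1 * (q.1 * |q.2|) + q.2 ∈ {n : ℤ | ∃ k : ℕ, n = -((p : ℤ) ^ k)} := by
      rw [hS]
      refine Set.mem_union_left _ ?_
      exact Set.mem_iUnion₂.2 ⟨q, hqP, ⟨q.1 * |q.2|, rfl⟩⟩
    obtain ⟨k, hk⟩ := hmem
    have h1 : (0:ℤ) < (p:ℤ)^k := pow_pos (by exact_mod_cast Nat.lt_of_lt_of_le two_pos hp2) k
    have h2 : (1:ℤ) ≤ q.1 * q.1 := by
      rcases lt_or_gt_of_ne hq0 with h | h <;> nlinarith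
    nlinarith [abs_nonneg q.2, neg_abs_le q.2,
      mul_nonneg (by linarith : (0:ℤ) ≤ q.1 * q.1 - 1) (abs_nonneg q.2)]
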